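/- Let S be a semigroup, {X_g}_{g∈S} an injective family of words over {b₁,b₂}, and let ξ be the smallest congruence on the free semigroup F(b₁,b₂) containing {(X_h, X_{h'}X_{h''}) : h = h'h'' in S}. Then the map γ : S → F(b₁,b₂)/ξ defined by γ(g) = X_g ξ is an injective semigroup homomorphism. -/

import Mathlib

/-- A set of words satisfies the overlap property if (1) no element is a proper subword of
another and (2) whenever `Y ≡ UV` and `Z ≡ WU` with `U` nonempty, `Y ≡ U ≡ Z`. -/
def OverlapProp {α : Type*} (M : Set (List α)) : Prop :=
  (∀ Y ∈ M, ∀ Z ∈ M, Y <:+: Z → Y = Z) ∧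
  (∀ Y ∈ M, ∀ Z ∈ M, ∀ U V W : List α, U ≠ [] → Y = U ++ V → Z = W ++ U →
    U = Y ∧ U = Z)

/-- The word (nonempty list of letters) corresponding to an element of a free semigroup. -/
def FSword {α : Type*} (x : FreeSemigroup α) : List α := x.head :: x.tail

/-- The defining relations `X_h = X_{h'} X_{h''}` for `h = h'h''` in `S`, as a relation on
the free semigroup `F(b₁,b₂)`. -/
def defRel {S : Type*} [Semigroup S] (X : S → FreeSemigroup (Fin 2)) :
    FreeSemigroup (Fin 2) → FreeSemigroup (Fin 2) → Prop := fun x y =>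
  ∃ h h' h'' : S, h = h' * h'' ∧ x = X h ∧ y = X h' * X h''

section Aux

set_option linter.unusedSectionVars false

variable {S : Type*} [Semigroup S]

lemma FSword_mul {α : Type*} (x y : FreeSemigroup α) :
    FSword (x * y) = FSword x ++ FSword y := rfl

lemma FSword_injective {α : Type*} : Function.Injective (FSword (α := α)) := by
  intro x y h
  cases x; cases y
  simpa [FSword, FreeSemigroup.ext_iff] using h

/-- concatenation of the words of a list of elements of `S` -/
def prodW (X : S → FreeSemigroup (Fin 2)) : List S → List (Fin 2) :=
  fun l => (l.map (fun g => FSword (X g))).flatten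

lemma prodW_nil (X : S → FreeSemigroup (Fin 2)) : prodW X [] = [] := rfl

lemma prodW_cons (X : S → FreeSemigroup (Fin 2)) (g : S) (l : List S) :
    prodW X (g :: l) = FSword (X g) ++ prodW X l := by
  simp [prodW]

lemma prodW_append (X : S → FreeSemigroup (Fin 2)) (l l' : List S) :
    prodW X (l ++ l') = prodW X l ++ prodW X l' := by
  simp [prodW]

lemma prodW_eq_nil (X : S → FreeSemigroup (Fin 2)) {l : List S} (h : prodW X l = []) :
    l = [] := by
  cases l with
  | nil => rfl
  | cons g t => simp [prodW_cons, FSword] at h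

/-- product of a nonempty list `g :: l` in the semigroup -/
def sprod : S → List S → S := fun g l => l.foldl (· * ·) g

lemma sprod_cons (g a : S) (l : List S) : sprod g (a :: l) = sprod (g * a) l := rfl

lemma sprod_append (g : S) (l l' : List S) :
    sprod g (l ++ l') = sprod (sprod g l) l' := List.foldl_append ..

lemma sprod_congr {l1 r : List S} {h h' h'' : S} (hh : h = h' * h'')
    {g0 : S} {l : List S} {g0' : S} {l' : List S}
    (h1 : g0 :: l = l1 ++ h :: r) (h2 : g0' :: l' = l1 ++ h' :: h'' :: r) :
    sprod g0 l = sprod g0' l' := by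
  cases l1 with
  | nil =>
      simp only [List.nil_append, List.cons.injEq] at h1 h2
      obtain ⟨rfl, rfl⟩ := h1
      obtain ⟨rfl, rfl⟩ := h2
      simp [sprod_cons, hh]
  | cons x t =>
      simp only [List.cons_append, List.cons.injEq] at h1 h2
      obtain ⟨rfl, rfl⟩ := h1
      obtain ⟨rfl, rfl⟩ := h2
      rw [sprod_append, sprod_append]
      simp [sprod_cons, hh, mul_assoc]

/-- Alignment lemma: any occurrence of a word of `M` inside a concatenation of
words of `M` must be aligned with the blocks. -/
lemma align {M : Set (List (Fin 2))} (hM : OverlapProp M) (hne : [] ∉ M)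
    {X : S → FreeSemigroup (Fin 2)} (hmem : ∀ g : S, FSword (X g) ∈ M)
    {Y : List (Fin 2)} (hY : Y ∈ M) :
    ∀ (gs : List S) (a b : List (Fin 2)), a ++ Y ++ b = prodW X gs →
    ∃ (l1 : List S) (g : S) (r : List S),
      gs = l1 ++ g :: r ∧ a = prodW X l1 ∧ Y = FSword (X g) ∧ b = prodW X r := by
  intro gs
  induction gs with
  | nil =>
      intro a b hab
      rw [prodW_nil] at hab
      have : Y = [] := by
        rcases List.append_eq_nil_iff.1 hab with ⟨h1, -⟩
        exact (List.append_eq_nil_iff.1 h1).2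
      exact absurd (this ▸ hY) hne
  | cons g1 gs ih =>
      intro a b hab
      rw [prodW_cons, List.append_assoc] at hab
      rcases List.append_eq_append_iff.1 hab with ⟨a', hW1, hYb⟩ | ⟨c', hac, hgsb⟩
      · by_cases ha' : a' = []
        · subst ha'
          rw [List.append_nil] at hW1
          rw [List.nil_append] at hYb
          obtain ⟨l1, g, r, h1, h2, h3, h4⟩ := ih [] b (by simpa using hYb)
          refine ⟨g1 :: l1, g, r, by simp [h1], ?_, h3, h4⟩
          rw [prodW_cons, ← h2, List.append_nil, hW1]
        · rcases List.append_eq_append_iff.1 hYb with ⟨t, ha't, hb⟩ | ⟨u, hYu, hgs⟩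
          · -- Y occurs inside the first block
            have hinf : Y <:+: FSword (X g1) := by
              refine ⟨a, t, ?_⟩
              rw [List.append_assoc, ← ha't, ← hW1]
            have hYW : Y = FSword (X g1) := hM.1 Y hY _ (hmem g1) hinf
            have hlen : (FSword (X g1)).length = a.length + (Y.length + t.length) := by
              rw [hW1, ha't]; simp
            have hYlen := congrArg List.length hYW
            have ha : a = [] :=
              List.eq_nil_of_length_eq_zero (by omega)
            have ht : t = [] :=
              List.eq_nil_of_length_eq_zero (by omega)
            refine ⟨[], g1, gs, rfl, by simp [ha, prodW_nil], hYW, ?_⟩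
            rw [hb, ht, List.nil_append]
          · -- Y overlaps the boundary of the first block
            obtain ⟨hUY, hUW⟩ := hM.2 Y hY _ (hmem g1) a' u a ha' hYu hW1
            have ha : a = [] := by
              have := congrArg List.length hW1
              rw [← hUW] at this
              simp at this
              exact this
            have hu : u = [] := by
              have := congrArg List.length hYu
              rw [← hUY] at this
              simp at this
              exact this
            refine ⟨[], g1, gs, rfl, by simp [ha, prodW_nil],
              hUY.symm.trans hUW, ?_⟩
            rw [hgs, hu, List.nil_append]
      · obtain ⟨l1, g, r, h1, h2, h3, h4⟩ :=
          ih c' b (by rw [List.append_assoc]; exact hgsb.symm)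
        exact ⟨g1 :: l1, g, r, by simp [h1], by rw [hac, h2, prodW_cons], h3, h4⟩

end Aux

/-- with `ξ` the smallest congruence on `F(b₁,b₂)` containing the relations
`(X_h, X_{h'}X_{h''})` for `h = h'h''` in `S`, the map `γ : S → F(b₁,b₂)/ξ`, `g ↦ X_g ξ`,
is an injective semigroup homomorphism. -/
theorem stmt11 {S : Type*} [Semigroup S] (M : Set (List (Fin 2))) (hM : OverlapProp M)
    (hne : [] ∉ M) (X : S → FreeSemigroup (Fin 2)) (hinj : Function.Injective X)
    (hmem : ∀ g : S, FSword (X g) ∈ M) :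
    ∃ γ : S →ₙ* (conGen (defRel X)).Quotient,
      Function.Injective γ ∧
      ∀ g : S, γ g = ((X g : FreeSemigroup (Fin 2)) : (conGen (defRel X)).Quotient) := by
  classical
  set Fact : List (Fin 2) → S → Prop :=
    fun w g => ∃ (g0 : S) (l : List S), w = prodW X (g0 :: l) ∧ sprod g0 l = g with hFact
  set c : Con (FreeSemigroup (Fin 2)) :=
    { r := fun x y => ∀ (a b : List (Fin 2)) (g : S),
        Fact (a ++ FSword x ++ b) g ↔ Fact (a ++ FSword y ++ b) g
      iseqv := ⟨fun x a b g => Iff.rfl,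
        fun h a b g => (h a b g).symm,
        fun h1 h2 a b g => (h1 a b g).trans (h2 a b g)⟩
      mul' := by
        intro w x y z h1 h2 a b g
        rw [FSword_mul, FSword_mul]
        have e1 : a ++ (FSword w ++ FSword y) ++ b = a ++ FSword w ++ (FSword y ++ b) := by
          simp [List.append_assoc]
        have e2 : a ++ (FSword x ++ FSword z) ++ b = (a ++ FSword x) ++ FSword z ++ b := by
          simp [List.append_assoc]
        have e3 : a ++ FSword x ++ (FSword y ++ b) = (a ++ FSword x) ++ FSword y ++ b := by
          simp [List.append_assoc]
        rw [e1, e2, h1 a (FSword y ++ b) g, e3, h2 (a ++ FSword x) b g] } with hc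
  have hle : conGen (defRel X) ≤ c := by
    apply Con.conGen_le.2
    rintro x y ⟨h, h', h'', hh, rfl, rfl⟩ a b g
    rw [FSword_mul]
    constructor
    · rintro ⟨g0, l, hw, hs⟩
      obtain ⟨l1, gm, r, hgs, ha, hYm, hb⟩ :=
        align hM hne hmem (hmem h) (g0 :: l) a b (by rw [← hw])
      obtain rfl : h = gm := hinj (FSword_injective hYm)
      obtain ⟨g0', l', hgl'⟩ : ∃ (g0' : S) (l' : List S),
          g0' :: l' = l1 ++ h' :: h'' :: r := by
        cases l1 with
        | nil => exact ⟨h', h'' :: r, rfl⟩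
        | cons x t => exact ⟨x, t ++ h' :: h'' :: r, rfl⟩
      refine ⟨g0', l', ?_, ?_⟩
      · rw [ha, hb, hgl', prodW_append, prodW_cons, prodW_cons, List.append_assoc,
          List.append_assoc]
      · rw [← hs]
        exact (sprod_congr hh hgs hgl').symm
    · rintro ⟨g0, l, hw, hs⟩
      obtain ⟨l1, gm, r, hgs, ha, hYm, hb⟩ :=
        align hM hne hmem (hmem h') (g0 :: l) a (FSword (X h'') ++ b)
          (by rw [← hw]; simp [List.append_assoc])
      obtain rfl : h' = gm := hinj (FSword_injective hYm)
      obtain ⟨l2, gm2, r2, hr, ha2, hYm2, hb2⟩ :=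
        align hM hne hmem (hmem h'') r [] b (by simpa using hb)
      have hl2 : l2 = [] := prodW_eq_nil X ha2.symm
      subst hl2
      obtain rfl : h'' = gm2 := hinj (FSword_injective hYm2)
      rw [List.nil_append] at hr
      subst hr
      obtain ⟨g0', l', hgl'⟩ : ∃ (g0' : S) (l' : List S),
          g0' :: l' = l1 ++ h :: r2 := by
        cases l1 with
        | nil => exact ⟨h, r2, rfl⟩
        | cons x t => exact ⟨x, t ++ h :: r2, rfl⟩
      refine ⟨g0', l', ?_, ?_⟩
      · rw [ha, hb2, hgl', prodW_append, prodW_cons, List.append_assoc]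
      · rw [← hs]
        exact sprod_congr hh hgl' hgs
  refine ⟨⟨fun g => ((X g : FreeSemigroup (Fin 2)) : (conGen (defRel X)).Quotient), ?_⟩, ?_, ?_⟩
  · intro g h
    rw [← Con.coe_mul, Con.eq]
    exact ConGen.Rel.of _ _ ⟨g * h, g, h, rfl, rfl, rfl⟩
  · intro g g' hgg'
    have hcon : conGen (defRel X) (X g) (X g') := (conGen (defRel X)).eq.1 hgg'
    have hC := (Con.le_def.1 hle) hcon [] [] g'
    have hfact : Fact ([] ++ FSword (X g') ++ []) g' := by
      refine ⟨g', [], ?_, rfl⟩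
      simp [prodW_cons, prodW_nil]
    obtain ⟨g0, l, hw, hs⟩ := hC.2 hfact
    obtain ⟨l1, gm, r, hgs, ha, hYm, hb⟩ :=
      align hM hne hmem (hmem g) (g0 :: l) [] [] hw
    have hl1 : l1 = [] := prodW_eq_nil X ha.symm
    have hr : r = [] := prodW_eq_nil X hb.symm
    subst hl1; subst hr
    simp only [List.nil_append, List.cons.injEq] at hgs
    obtain ⟨rfl, rfl⟩ := hgs
    exact (hinj (FSword_injective hYm)).trans hs
  · intro g; rfl
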